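/- Let G be a compact topological group equipped with its Haar probability measure dg, and let (ρ, V) be a continuous finite-dimensional irreducible unitary representation of G on a complex inner product space V of dimension d, with character χ(g) = Tr(ρ(g)). Then for all x, y ∈ G, ∫_G χ(x g y g⁻¹) dg = χ(x) χ(y) / d. -/

import Mathlib

open MeasureTheory

/-- For a continuous finite-dimensional irreducible unitary representation `ρ` of a compact
topological group `G` (Haar probability measure `μ`), with character `χ(g) = Tr(ρ(g))` and
dimension `d`, one has `∫_G χ(x g y g⁻¹) dg = χ(x) χ(y) / d` for all `x, y ∈ G`. -/
theorem integral_character_adjoint_orbit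
    {G : Type*} [Group G] [TopologicalSpace G] [IsTopologicalGroup G] [CompactSpace G]
    [MeasurableSpace G] [BorelSpace G]
    (μ : Measure G) [μ.IsHaarMeasure] [IsProbabilityMeasure μ]
    {V : Type*} [NormedAddCommGroup V] [InnerProductSpace ℂ V] [FiniteDimensional ℂ V]
    (ρ : G →* (V ≃ₗᵢ[ℂ] V))
    (hcont : ∀ v : V, Continuous fun g : G => ρ g v)
    (hirr : ∀ W : Submodule ℂ V, (∀ g : G, ∀ v ∈ W, ρ g v ∈ W) → W = ⊥ ∨ W = ⊤)
    (χ : G → ℂ)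
    (hχ : ∀ g : G, χ g = LinearMap.trace ℂ V ((ρ g).toLinearEquiv : V →ₗ[ℂ] V))
    (x y : G) :
    ∫ g : G, χ (x * g * y * g⁻¹) ∂μ = χ x * χ y / (Module.finrank ℂ V : ℂ) := by
  rcases subsingleton_or_nontrivial V with hV | hV
  · have h0 : ∀ g : G, χ g = 0 := fun g => by
      rw [hχ]
      have : (((ρ g).toLinearEquiv : V →ₗ[ℂ] V)) = 0 := Subsingleton.elim _ _
      rw [this, map_zero]
    simp [h0]
  set U : G → (V →L[ℂ] V) := fun g => (ρ g).toLinearIsometry.toContinuousLinearMap with hUdef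
  have hUapply : ∀ g v, U g v = ρ g v := fun _ _ => rfl
  have hUcont : Continuous U := continuous_clm_apply.2 fun v => hcont v
  have hUmul : ∀ a b : G, U (a * b) = (U a).comp (U b) := by
    intro a b; ext v
    simp only [ContinuousLinearMap.comp_apply, hUapply, map_mul]
    rfl
  have hUone : U 1 = ContinuousLinearMap.id ℂ V := by
    ext v
    simp only [hUapply, map_one, ContinuousLinearMap.id_apply]
    rfl
  have hUtrace : ∀ g : G, LinearMap.trace ℂ V ((U g) : V →ₗ[ℂ] V) = χ g := fun g => (hχ g).symm
  set f : G → (V →L[ℂ] V) := fun g => U (g * y * g⁻¹) with hfdef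
  have hfcont : Continuous f := by
    apply hUcont.comp
    continuity
  have hfint : Integrable f μ :=
    hfcont.integrable_of_hasCompactSupport (HasCompactSupport.of_compactSpace f)
  set T : V →L[ℂ] V := ∫ g, f g ∂μ with hTdef
  -- trace functional as a continuous linear map
  set L : (V →L[ℂ] V) →L[ℂ] ℂ :=
    LinearMap.toContinuousLinearMap ((LinearMap.trace ℂ V).comp (ContinuousLinearMap.coeLM ℂ)) with hLdef
  have hLapply : ∀ A : V →L[ℂ] V, L A = LinearMap.trace ℂ V (A : V →ₗ[ℂ] V) := fun A => rfl
  -- T commutes with the representation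
  have hcomm : ∀ h : G, ∀ v : V, U h (T v) = T (U h v) := by
    intro h v
    set C : (V →L[ℂ] V) →L[ℂ] (V →L[ℂ] V) :=
      (ContinuousLinearMap.compL ℂ V V V (U h)).comp
        ((ContinuousLinearMap.compL ℂ V V V).flip (U h⁻¹)) with hCdef
    have hCapply : ∀ A : V →L[ℂ] V, C A = (U h).comp (A.comp (U h⁻¹)) := fun A => rfl
    have key : ∀ g : G, (U h).comp ((f g).comp (U h⁻¹)) = f (h * g) := by
      intro g
      simp only [hfdef, ← hUmul]
      congr 1
      group
    have h1 : (U h).comp (T.comp (U h⁻¹)) = T := by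
      have e1 : (U h).comp (T.comp (U h⁻¹)) = ∫ g, (U h).comp ((f g).comp (U h⁻¹)) ∂μ := by
        rw [← hCapply T, hTdef, ← ContinuousLinearMap.integral_comp_comm C hfint]
        simp only [hCapply]
      rw [e1]
      simp_rw [key]
      exact integral_mul_left_eq_self (fun g => f g) h
    have h2 : U h⁻¹ (U h v) = v := by
      rw [← ContinuousLinearMap.comp_apply, ← hUmul, inv_mul_cancel, hUone,
        ContinuousLinearMap.id_apply]
    have h3 := congrFun (congrArg DFunLike.coe h1) (U h v)
    simp only [ContinuousLinearMap.comp_apply, h2] at h3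
    exact h3
  -- Schur's lemma: T = c • id
  obtain ⟨c, hc⟩ : ∃ c : ℂ, Module.End.HasEigenvalue (T : V →ₗ[ℂ] V) c :=
    Module.End.exists_eigenvalue _
  have hW : Module.End.eigenspace (T : V →ₗ[ℂ] V) c = ⊤ := by
    have hinv : ∀ g : G, ∀ v ∈ Module.End.eigenspace (T : V →ₗ[ℂ] V) c,
        ρ g v ∈ Module.End.eigenspace (T : V →ₗ[ℂ] V) c := ?_
    · rcases hirr _ hinv with h' | h'
      · exact absurd h' hc
      · exact h'
    intro g v hv
    rw [Module.End.mem_eigenspace_iff] at hv ⊢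
    have := hcomm g v
    simp only [hUapply] at this
    calc (T : V →ₗ[ℂ] V) (ρ g v) = T (ρ g v) := rfl
      _ = ρ g (T v) := by rw [← this]
      _ = ρ g ((T : V →ₗ[ℂ] V) v) := rfl
      _ = ρ g (c • v) := by rw [hv]
      _ = c • (ρ g v) := map_smul _ _ _
  have hTsmul : (T : V →ₗ[ℂ] V) = c • LinearMap.id := by
    apply LinearMap.ext
    intro v
    have hv : v ∈ Module.End.eigenspace (T : V →ₗ[ℂ] V) c := hW ▸ Submodule.mem_top
    rw [Module.End.mem_eigenspace_iff] at hv
    simpa using hv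
  -- trace of T
  have htraceT : LinearMap.trace ℂ V (T : V →ₗ[ℂ] V) = χ y := by
    have e1 : L T = ∫ g, L (f g) ∂μ := (ContinuousLinearMap.integral_comp_comm L hfint).symm
    have e2 : ∀ g : G, L (f g) = χ y := by
      intro g
      rw [hLapply]
      have hsplit : f g = (U (g * y)).comp (U g⁻¹) := by
        rw [hfdef]; simp only; rw [← hUmul]
      rw [hsplit, ContinuousLinearMap.toLinearMap_comp]
      rw [show ((U (g * y)) : V →ₗ[ℂ] V) ∘ₗ ((U g⁻¹) : V →ₗ[ℂ] V)
          = ((U (g * y)) : V →ₗ[ℂ] V) * ((U g⁻¹) : V →ₗ[ℂ] V) from rfl]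
      rw [LinearMap.trace_mul_comm]
      rw [show ((U g⁻¹) : V →ₗ[ℂ] V) * ((U (g * y)) : V →ₗ[ℂ] V)
          = (((U g⁻¹).comp (U (g * y)) : V →L[ℂ] V) : V →ₗ[ℂ] V) from rfl]
      rw [← hUmul, inv_mul_cancel_left, hUtrace]
    rw [hLapply] at e1
    rw [e1]
    simp only [e2]
    simp
  have hd : (Module.finrank ℂ V : ℂ) ≠ 0 := by
    exact_mod_cast Module.finrank_pos.ne'
  have hcval : c = χ y / (Module.finrank ℂ V : ℂ) := by
    rw [hTsmul] at htraceT
    simp only [_root_.map_smul, LinearMap.trace_id, smul_eq_mul] at htraceT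
    field_simp
    linear_combination htraceT
  -- final computation
  set M : (V →L[ℂ] V) →L[ℂ] ℂ := L.comp (ContinuousLinearMap.compL ℂ V V V (U x)) with hMdef
  have hMapply : ∀ A : V →L[ℂ] V, M A = LinearMap.trace ℂ V (((U x).comp A : V →L[ℂ] V) : V →ₗ[ℂ] V) :=
    fun A => rfl
  have e3 : ∀ g : G, χ (x * g * y * g⁻¹) = M (f g) := by
    intro g
    rw [hMapply, hfdef]
    simp only [← hUmul]
    rw [← hUtrace]
    congr 2
    group
  calc ∫ g : G, χ (x * g * y * g⁻¹) ∂μ = ∫ g, M (f g) ∂μ := by simp_rw [e3]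
    _ = M T := by rw [hTdef, ContinuousLinearMap.integral_comp_comm M hfint]
    _ = LinearMap.trace ℂ V (((U x) : V →ₗ[ℂ] V) ∘ₗ (T : V →ₗ[ℂ] V)) := by
        rw [hMapply]; rfl
    _ = LinearMap.trace ℂ V (c • ((U x) : V →ₗ[ℂ] V)) := by
        rw [hTsmul]; congr 1; ext v; simp
    _ = c * χ x := by rw [_root_.map_smul, hUtrace, smul_eq_mul]
    _ = χ x * χ y / (Module.finrank ℂ V : ℂ) := by rw [hcval]; ring
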